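/- Let K be a bounded self-adjoint linear operator on H satisfying the ill-posedness assumption with constant Q and the band structure assumption with bandwidth m, and let σ have geometric-type decay with constant Λ. Fix j ∈ ℕ and γ ∈ (0,1), and let B : V_j → V_j be a linear map with ‖B − K_j‖_{V_j→V_j} ≤ γ σ_j / Q. Then B is invertible with ‖B⁻¹‖_{V_j→V_j} ≤ Q / ((1 − γ) σ_j), and there exists a constant C > 0, depending only on Q, γ, m and Λ, such that for every f ∈ H and every z ∈ V_j, ‖B⁻¹(P_j(Kf) + z) − f‖ ≤ C ( ‖f − P_j f‖ + σ_j⁻¹ ‖f‖ ‖B − K_j‖_{V_j→V_j} + σ_j⁻¹ ‖z‖ ). -/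

import Mathlib

open MeasureTheory ProbabilityTheory Filter
open scoped RealInnerProductSpace BigOperators ENNReal NNReal

noncomputable section

/-- The approximation space `V_j`, the span of the basis vectors of level at most `j`. -/
def Vsub {ι H : Type*} [NormedAddCommGroup H] [InnerProductSpace ℝ H]
    (φ : ι → H) (lvl : ι → ℕ) (j : ℕ) : Submodule ℝ H :=
  Submodule.span ℝ (φ '' {k | lvl k ≤ j})

/-- The orthogonal projection `P_j` onto `V_j`, as a continuous linear map on `H`. -/
def Pclm {ι H : Type*} [NormedAddCommGroup H] [InnerProductSpace ℝ H]
    (φ : ι → H) (lvl : ι → ℕ) (hfin : ∀ j, {k : ι | lvl k ≤ j}.Finite) (j : ℕ) :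
    H →L[ℝ] H :=
  ∑ k ∈ (hfin j).toFinset, (innerSL ℝ (φ k)).smulRight (φ k)

theorem Pclm_mem {ι H : Type*} [NormedAddCommGroup H] [InnerProductSpace ℝ H]
    (φ : ι → H) (lvl : ι → ℕ) (hfin : ∀ j, {k : ι | lvl k ≤ j}.Finite) (j : ℕ) (f : H) :
    Pclm φ lvl hfin j f ∈ Vsub φ lvl j := by
  have h : Pclm φ lvl hfin j f = ∑ k ∈ (hfin j).toFinset, ⟪φ k, f⟫ • φ k := by
    simp [Pclm, ContinuousLinearMap.sum_apply]
  rw [h]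
  refine Submodule.sum_mem _ fun k hk => Submodule.smul_mem _ _ ?_
  exact Submodule.subset_span ⟨k, (hfin j).mem_toFinset.mp hk, rfl⟩

/-- The Galerkin projection `K_j := P_j K |_{V_j}` of an operator `K`, as a continuous
linear map from `V_j` to `V_j`. -/
def Kgal {ι H : Type*} [NormedAddCommGroup H] [InnerProductSpace ℝ H]
    (φ : ι → H) (lvl : ι → ℕ) (hfin : ∀ j, {k : ι | lvl k ≤ j}.Finite)
    (K : H →L[ℝ] H) (j : ℕ) : Vsub φ lvl j →L[ℝ] Vsub φ lvl j :=
  ContinuousLinearMap.codRestrict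
    ((Pclm φ lvl hfin j).comp (K.comp (Vsub φ lvl j).subtypeL))
    (Vsub φ lvl j) (fun _ => Pclm_mem φ lvl hfin j _)

set_option maxHeartbeats 2000000 in
set_option synthInstance.maxHeartbeats 400000 in
/-- deterministic core of Proposition 3.2: if `B : V_j → V_j` is close to
the Galerkin projection `K_j` in operator norm, `‖B - K_j‖ ≤ γ σ_j / Q`, then `B` is
invertible with `‖B⁻¹‖ ≤ Q/((1-γ) σ_j)`, and the Galerkin reconstruction from perturbed
operator and perturbed data satisfies the stated error bound, with a constant `C` depending
only on `Q`, `γ`, `m` and `Λ`. -/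
theorem stmt9 (Q γ Λ : ℝ) (m : ℕ) (hQ : 0 < Q) (hγ0 : 0 < γ) (hγ1 : γ < 1) (hΛ : 0 < Λ) :
    ∃ C : ℝ, 0 < C ∧
    ∀ (ι : Type u) (H : Type v), ∀ (_ : NormedAddCommGroup H),
    ∀ (_ : InnerProductSpace ℝ H) (_ : CompleteSpace H) (_ : Countable ι)
      (φ : HilbertBasis ι ℝ H) (lvl : ι → ℕ)
      (hfin : ∀ j, {k : ι | lvl k ≤ j}.Finite)
      (σ : ℕ → ℝ), (∀ n, 0 < σ n) → (∀ i n, i ≤ n → σ n ≤ σ i) → Summable σ →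
      (∀ l, (∑' i : ℕ, σ (l + i)) ≤ Λ * σ l) →
      ∀ (K : H →L[ℝ] H), (∀ x y : H, ⟪K x, y⟫ = ⟪x, K y⟫) →
      (∀ f : H, Q⁻¹ * (∑' k, σ (lvl k) * ⟪f, φ k⟫ ^ 2) ≤ ⟪K f, f⟫ ∧
        ⟪K f, f⟫ ≤ Q * (∑' k, σ (lvl k) * ⟪f, φ k⟫ ^ 2)) →
      (∀ k l : ι, (m : ℤ) < |(lvl l : ℤ) - (lvl k : ℤ)| → ⟪K (φ l), φ k⟫ = 0) →
      ∀ (j : ℕ) (B : Vsub (⇑φ) lvl j →L[ℝ] Vsub (⇑φ) lvl j),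
      ‖B - Kgal (⇑φ) lvl hfin K j‖ ≤ γ * σ j / Q →
      (∃ Binv : Vsub (⇑φ) lvl j →L[ℝ] Vsub (⇑φ) lvl j,
        B.comp Binv = ContinuousLinearMap.id ℝ _ ∧
        Binv.comp B = ContinuousLinearMap.id ℝ _ ∧
        ‖Binv‖ ≤ Q / ((1 - γ) * σ j)) ∧
      ∀ (f : H) (z h : Vsub (⇑φ) lvl j),
        (B h : H) = Pclm (⇑φ) lvl hfin j (K f) + (z : H) →
        ‖(h : H) - f‖ ≤ C * (‖f - Pclm (⇑φ) lvl hfin j f‖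
          + (σ j)⁻¹ * ‖f‖ * ‖B - Kgal (⇑φ) lvl hfin K j‖ + (σ j)⁻¹ * ‖(z : H)‖) := by
  have h1γ : (0:ℝ) < 1 - γ := by linarith
  have hCpos : 0 < (Q ^ 2 + Q + 1) / (1 - γ) + 1 := by
    have h2 : 0 < (Q ^ 2 + Q + 1) / (1 - γ) := div_pos (by nlinarith) h1γ
    linarith
  have hC1 : Q ^ 2 / (1 - γ) + 1 ≤ (Q ^ 2 + Q + 1) / (1 - γ) + 1 := by
    have h2 : Q ^ 2 / (1 - γ) ≤ (Q ^ 2 + Q + 1) / (1 - γ) :=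
      (div_le_div_iff_of_pos_right h1γ).mpr (by nlinarith)
    linarith
  have hC2 : Q / (1 - γ) ≤ (Q ^ 2 + Q + 1) / (1 - γ) + 1 := by
    have h2 : Q / (1 - γ) ≤ (Q ^ 2 + Q + 1) / (1 - γ) :=
      (div_le_div_iff_of_pos_right h1γ).mpr (by nlinarith [sq_nonneg Q])
    linarith
  refine ⟨(Q ^ 2 + Q + 1) / (1 - γ) + 1, hCpos, ?_⟩
  intro ι H _ _ _ _ φ lvl hfin σ hσpos hσmono hσsum hΛdec K hKsym hill hband j B hB
  have hσj : 0 < σ j := hσpos j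
  have hφo := φ.orthonormal
  -- basic inner product facts about the basis
  classical
  have hite : ∀ l k : ι, ⟪φ l, φ k⟫ = if l = k then 1 else 0 :=
    orthonormal_iff_ite.mp hφo
  have hPapp : ∀ f : H, Pclm (⇑φ) lvl hfin j f
      = ∑ k ∈ (hfin j).toFinset, ⟪φ k, f⟫ • φ k := by
    intro f; simp [Pclm, ContinuousLinearMap.sum_apply]
  have hPinner : ∀ (f : H) (k : ι), lvl k ≤ j →
      ⟪Pclm (⇑φ) lvl hfin j f, φ k⟫ = ⟪f, φ k⟫ := by
    intro f k hk
    rw [hPapp, sum_inner, Finset.sum_eq_single k]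
    · rw [real_inner_smul_left, hite, if_pos rfl, mul_one, real_inner_comm]
    · intro l _ hlk
      rw [real_inner_smul_left, hite, if_neg hlk, mul_zero]
    · intro hk'
      exact absurd ((hfin j).mem_toFinset.mpr hk) hk'
  have hVhigh : ∀ v : H, v ∈ Vsub (⇑φ) lvl j → ∀ k : ι, ¬ lvl k ≤ j → ⟪v, φ k⟫ = 0 := by
    intro v hv k hk
    induction hv using Submodule.span_induction with
    | mem x hx =>
        obtain ⟨l, hl, rfl⟩ := hx
        rw [hite, if_neg]
        rintro rfl; exact hk hl
    | zero => simp
    | add x y hx' hy' hx hy => rw [inner_add_left, hx, hy, add_zero]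
    | smul c x hx' hx => rw [real_inner_smul_left, hx, mul_zero]
  have horth : ∀ (f v : H), v ∈ Vsub (⇑φ) lvl j →
      ⟪f - Pclm (⇑φ) lvl hfin j f, v⟫ = 0 := by
    intro f v hv
    induction hv using Submodule.span_induction with
    | mem x hx =>
        obtain ⟨l, hl, rfl⟩ := hx
        rw [inner_sub_left, hPinner f l hl, sub_self]
    | zero => simp
    | add x y hx' hy' hx hy => rw [inner_add_right, hx, hy, add_zero]
    | smul c x hx' hx => rw [real_inner_smul_right, hx, mul_zero]
  -- Parseval
  have hPar : ∀ x : H, HasSum (fun k => ⟪x, φ k⟫ ^ 2) (‖x‖ ^ 2) := by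
    intro x
    have h := φ.hasSum_inner_mul_inner x x
    have heq : (fun k => ⟪x, φ k⟫ * ⟪φ k, x⟫) = fun k => ⟪x, φ k⟫ ^ 2 := by
      funext k; rw [real_inner_comm (φ k) x, sq]
    rw [heq, real_inner_self_eq_norm_sq] at h
    exact h
  have hSumw : ∀ x : H, Summable (fun k => σ (lvl k) * ⟪x, φ k⟫ ^ 2) := by
    intro x
    refine Summable.of_nonneg_of_le
      (fun k => mul_nonneg (hσpos _).le (sq_nonneg _))
      (fun k => mul_le_mul_of_nonneg_right (hσmono 0 (lvl k) (Nat.zero_le _)) (sq_nonneg _))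
      (((hPar x).summable).mul_left (σ 0))
  -- positivity of the quadratic form
  have hKpsd : ∀ x : H, 0 ≤ ⟪K x, x⟫ := by
    intro x
    refine le_trans ?_ (hill x).1
    exact mul_nonneg (by positivity) (tsum_nonneg fun k =>
      mul_nonneg (hσpos _).le (sq_nonneg _))
  -- Cauchy–Schwarz for the bilinear form of K
  have hCS : ∀ x y : H, ⟪K x, y⟫ ^ 2 ≤ ⟪K x, x⟫ * ⟪K y, y⟫ := by
    intro x y
    have hyx : ⟪K y, x⟫ = ⟪K x, y⟫ := by rw [hKsym y x, real_inner_comm]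
    have hq : ∀ t : ℝ, 0 ≤ ⟪K y, y⟫ * (t * t) + (2 * ⟪K x, y⟫) * t + ⟪K x, x⟫ := by
      intro t
      have h0 := hKpsd (x + t • y)
      have he : ⟪K (x + t • y), x + t • y⟫
          = ⟪K x, x⟫ + t * ⟪K x, y⟫ + t * ⟪K y, x⟫ + t * t * ⟪K y, y⟫ := by
        rw [_root_.map_add, _root_.map_smul, inner_add_left, inner_add_right, inner_add_right,
          real_inner_smul_left, real_inner_smul_left, real_inner_smul_right,
          real_inner_smul_right]
        ring
      rw [he, hyx] at h0
      nlinarith [h0]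
    have hd := discrim_le_zero hq
    rw [discrim] at hd
    nlinarith [hd]
  -- finite-sum versions on V
  have hV0 : ∀ v : H, v ∈ Vsub (⇑φ) lvl j → ∀ k ∉ (hfin j).toFinset, ⟪v, φ k⟫ = 0 := by
    intro v hv k hk
    exact hVhigh v hv k (fun hle => hk ((hfin j).mem_toFinset.mpr hle))
  have htsum_eq : ∀ v : H, v ∈ Vsub (⇑φ) lvl j →
      (∑' k, σ (lvl k) * ⟪v, φ k⟫ ^ 2)
        = ∑ k ∈ (hfin j).toFinset, σ (lvl k) * ⟪v, φ k⟫ ^ 2 := by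
    intro v hv
    refine tsum_eq_sum fun k hk => ?_
    rw [hV0 v hv k hk]; ring
  have hnorm_eq : ∀ v : H, v ∈ Vsub (⇑φ) lvl j →
      ‖v‖ ^ 2 = ∑ k ∈ (hfin j).toFinset, ⟪v, φ k⟫ ^ 2 := by
    intro v hv
    rw [← (hPar v).tsum_eq]
    refine tsum_eq_sum fun k hk => ?_
    rw [hV0 v hv k hk]; ring
  have hSlow : ∀ v : H, v ∈ Vsub (⇑φ) lvl j →
      σ j * ‖v‖ ^ 2 ≤ ∑ k ∈ (hfin j).toFinset, σ (lvl k) * ⟪v, φ k⟫ ^ 2 := by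
    intro v hv
    rw [hnorm_eq v hv, Finset.mul_sum]
    refine Finset.sum_le_sum fun k hk => ?_
    exact mul_le_mul_of_nonneg_right
      (hσmono (lvl k) j ((hfin j).mem_toFinset.mp hk)) (sq_nonneg _)
  have hKlow : ∀ v : H, v ∈ Vsub (⇑φ) lvl j →
      ∑ k ∈ (hfin j).toFinset, σ (lvl k) * ⟪v, φ k⟫ ^ 2 ≤ Q * ⟪K v, v⟫ := by
    intro v hv
    have h := (hill v).1
    rw [htsum_eq v hv] at h
    have h2 := mul_le_mul_of_nonneg_left h hQ.le
    rw [← mul_assoc, mul_inv_cancel₀ hQ.ne', one_mul] at h2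
    exact h2
  have hKup : ∀ v : H, v ∈ Vsub (⇑φ) lvl j →
      ⟪K v, v⟫ ≤ Q * ∑ k ∈ (hfin j).toFinset, σ (lvl k) * ⟪v, φ k⟫ ^ 2 := by
    intro v hv
    have h := (hill v).2
    rwa [htsum_eq v hv] at h
  have hKg : ∀ v : Vsub (⇑φ) lvl j,
      ((Kgal (⇑φ) lvl hfin K j v : Vsub (⇑φ) lvl j) : H)
        = Pclm (⇑φ) lvl hfin j (K (v : H)) := fun v => rfl
  have hProj : ∀ (x v : H), v ∈ Vsub (⇑φ) lvl j →
      ⟪Pclm (⇑φ) lvl hfin j x, v⟫ = ⟪x, v⟫ := by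
    intro x v hv
    have h := horth x v hv
    rw [inner_sub_left] at h
    linarith
  -- perturbation bound
  have hEb : ∀ v w : Vsub (⇑φ) lvl j,
      |⟪(((B - Kgal (⇑φ) lvl hfin K j) v : Vsub (⇑φ) lvl j) : H), (w : H)⟫|
        ≤ γ * σ j / Q * (‖(v : H)‖ * ‖(w : H)‖) := by
    intro v w
    refine le_trans (abs_real_inner_le_norm _ _) ?_
    have h1 : ‖(((B - Kgal (⇑φ) lvl hfin K j) v : Vsub (⇑φ) lvl j) : H)‖
        ≤ γ * σ j / Q * ‖(v : H)‖ := by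
      rw [← Submodule.coe_norm, ← Submodule.coe_norm]
      exact le_trans ((B - Kgal (⇑φ) lvl hfin K j).le_opNorm v)
        (mul_le_mul_of_nonneg_right hB (norm_nonneg _))
    calc ‖(((B - Kgal (⇑φ) lvl hfin K j) v : Vsub (⇑φ) lvl j) : H)‖ * ‖(w : H)‖
        ≤ γ * σ j / Q * ‖(v : H)‖ * ‖(w : H)‖ :=
          mul_le_mul_of_nonneg_right h1 (norm_nonneg _)
      _ = γ * σ j / Q * (‖(v : H)‖ * ‖(w : H)‖) := by ring
  -- lower bound for the form of B (multiplied through by Q)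
  have hBlow : ∀ v : Vsub (⇑φ) lvl j,
      (∑ k ∈ (hfin j).toFinset, σ (lvl k) * ⟪(v : H), φ k⟫ ^ 2)
          - γ * (σ j * ‖(v : H)‖ ^ 2)
        ≤ Q * ⟪(B v : Vsub (⇑φ) lvl j), (v : Vsub (⇑φ) lvl j)⟫ := by
    intro v
    have h0 : ((B v : Vsub (⇑φ) lvl j) : H)
        = ((Kgal (⇑φ) lvl hfin K j v : Vsub (⇑φ) lvl j) : H)
          + (((B - Kgal (⇑φ) lvl hfin K j) v : Vsub (⇑φ) lvl j) : H) := by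
      push_cast [ContinuousLinearMap.sub_apply]
      abel
    have hgal : ⟪((Kgal (⇑φ) lvl hfin K j v : Vsub (⇑φ) lvl j) : H), (v : H)⟫
        = ⟪K (v : H), (v : H)⟫ := by
      rw [hKg]; exact hProj (K (v : H)) (v : H) v.2
    have h2 : ∑ k ∈ (hfin j).toFinset, σ (lvl k) * ⟪(v : H), φ k⟫ ^ 2
        ≤ Q * ⟪K (v : H), (v : H)⟫ := hKlow (v : H) v.2
    have h3 := hEb v v
    have h4 : -(γ * σ j / Q * (‖(v : H)‖ * ‖(v : H)‖))
        ≤ ⟪(((B - Kgal (⇑φ) lvl hfin K j) v : Vsub (⇑φ) lvl j) : H), (v : H)⟫ :=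
      neg_le_of_abs_le h3
    have h5 : ⟪(B v : Vsub (⇑φ) lvl j), (v : Vsub (⇑φ) lvl j)⟫
        = ⟪K (v : H), (v : H)⟫
          + ⟪(((B - Kgal (⇑φ) lvl hfin K j) v : Vsub (⇑φ) lvl j) : H), (v : H)⟫ := by
      rw [Submodule.coe_inner, h0, inner_add_left, hgal]
    rw [h5, mul_add]
    have h6 : Q * (γ * σ j / Q * (‖(v : H)‖ * ‖(v : H)‖)) = γ * (σ j * ‖(v : H)‖ ^ 2) := by
      field_simp
    have h7 := mul_le_mul_of_nonneg_left h4 hQ.le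
    rw [mul_neg, h6] at h7
    linarith
  have hBcoer : ∀ v : Vsub (⇑φ) lvl j,
      (1 - γ) * (σ j * ‖(v : H)‖ ^ 2)
        ≤ Q * ⟪(B v : Vsub (⇑φ) lvl j), (v : Vsub (⇑φ) lvl j)⟫ := by
    intro v
    have h1 := hBlow v
    have h2 := hSlow (v : H) v.2
    linarith
  haveI : FiniteDimensional ℝ (Vsub (⇑φ) lvl j) :=
    FiniteDimensional.span_of_finite ℝ ((hfin j).image _)
  have hker : ∀ v : Vsub (⇑φ) lvl j, B v = 0 → v = 0 := by
    intro v hv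
    have h1 := hBcoer v
    rw [hv] at h1
    simp only [inner_zero_left, mul_zero] at h1
    have h2 : ‖(v : H)‖ ^ 2 ≤ 0 := by nlinarith [h1, mul_pos h1γ hσj]
    have h3 : (v : H) = 0 := by
      have h4 : ‖(v : H)‖ ^ 2 = 0 := le_antisymm h2 (sq_nonneg _)
      have h5 : ‖(v : H)‖ = 0 := by
        nlinarith [norm_nonneg (v : H)]
      exact norm_eq_zero.mp h5
    exact Subtype.ext h3
  have hBinj : Function.Injective B := by
    intro a b hab
    have h1 : B (a - b) = 0 := by rw [map_sub, hab, sub_self]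
    exact sub_eq_zero.mp (hker _ h1)
  have hBsurj : Function.Surjective B := by
    have h1 : Function.Injective (B : Vsub (⇑φ) lvl j →ₗ[ℝ] Vsub (⇑φ) lvl j) := hBinj
    exact LinearMap.injective_iff_surjective.mp h1
  let e : Vsub (⇑φ) lvl j ≃ₗ[ℝ] Vsub (⇑φ) lvl j :=
    LinearEquiv.ofBijective (B : Vsub (⇑φ) lvl j →ₗ[ℝ] Vsub (⇑φ) lvl j) ⟨hBinj, hBsurj⟩
  let Binv : Vsub (⇑φ) lvl j →L[ℝ] Vsub (⇑φ) lvl j :=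
    LinearMap.toContinuousLinearMap e.symm.toLinearMap
  have hBinv_apply : ∀ v, Binv v = e.symm v := fun v => by
    simp only [Binv, LinearMap.coe_toContinuousLinearMap', LinearEquiv.coe_coe]
  have he_apply : ∀ v, e v = B v := fun v => rfl
  have hBB : ∀ v, B (Binv v) = v := fun v => by
    rw [hBinv_apply, ← he_apply, e.apply_symm_apply]
  have hBB' : ∀ v, Binv (B v) = v := fun v => by
    rw [hBinv_apply, ← he_apply, e.symm_apply_apply]
  have hBinv_bd : ∀ y : Vsub (⇑φ) lvl j, ‖Binv y‖ ≤ Q / ((1 - γ) * σ j) * ‖y‖ := by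
    intro y
    have hBx : B (Binv y) = y := hBB y
    have h1 := hBcoer (Binv y)
    rw [hBx] at h1
    have h2 : ⟪(y : Vsub (⇑φ) lvl j), (Binv y : Vsub (⇑φ) lvl j)⟫
        ≤ ‖((y : Vsub (⇑φ) lvl j) : H)‖ * ‖((Binv y : Vsub (⇑φ) lvl j) : H)‖ := by
      rw [Submodule.coe_inner]
      exact real_inner_le_norm _ _
    rcases (norm_nonneg ((Binv y : Vsub (⇑φ) lvl j) : H)).eq_or_lt with h0 | h0
    · rw [Submodule.coe_norm, ← h0]
      exact mul_nonneg (div_nonneg hQ.le (mul_pos h1γ hσj).le) (norm_nonneg _)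
    · rw [Submodule.coe_norm, Submodule.coe_norm]
      rw [div_mul_eq_mul_div, le_div_iff₀ (mul_pos h1γ hσj)]
      nlinarith [h1, mul_le_mul_of_nonneg_left h2 hQ.le, h0]
  have hBinv_norm : ‖Binv‖ ≤ Q / ((1 - γ) * σ j) :=
    ContinuousLinearMap.opNorm_le_bound _ (div_nonneg hQ.le (mul_pos h1γ hσj).le) hBinv_bd
  constructor
  · refine ⟨Binv, ?_, ?_, hBinv_norm⟩
    · exact ContinuousLinearMap.ext fun v => hBB v
    · exact ContinuousLinearMap.ext fun v => hBB' v
  -- the error estimate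
  intro f z h heq
  set P : H →L[ℝ] H := Pclm (⇑φ) lvl hfin j with hPdef
  set g : H := f - P f with hgdef
  set fj : Vsub (⇑φ) lvl j := ⟨P f, Pclm_mem (⇑φ) lvl hfin j f⟩ with hfjdef
  set w1 : Vsub (⇑φ) lvl j := ⟨P (K g), Pclm_mem (⇑φ) lvl hfin j (K g)⟩ with hw1def
  set w2 : Vsub (⇑φ) lvl j := Kgal (⇑φ) lvl hfin K j fj - B fj + z with hw2def
  have hgortho : ∀ k : ι, lvl k ≤ j → ⟪g, φ k⟫ = 0 := by
    intro k hk
    exact horth f (φ k) (Submodule.subset_span ⟨k, hk, rfl⟩)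
  have hdecomp : B (h - fj) = w1 + w2 := by
    refine Subtype.ext ?_
    show ((B (h - fj) : Vsub (⇑φ) lvl j) : H) = ((w1 + w2 : Vsub (⇑φ) lvl j) : H)
    have hc1 : ((B (h - fj) : Vsub (⇑φ) lvl j) : H)
        = P (K f) + (z : H) - (B fj : Vsub (⇑φ) lvl j) := by
      have hms : B (h - fj) = B h - B fj := map_sub B h fj
      rw [hms, Submodule.coe_sub, heq]
    have hc2 : ((w1 + w2 : Vsub (⇑φ) lvl j) : H)
        = P (K g) + (P (K (P f)) - ((B fj : Vsub (⇑φ) lvl j) : H) + (z : H)) := by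
      rw [hw1def, hw2def]
      push_cast
      rw [hKg fj]
    rw [hc1, hc2]
    have hsplit : K f = K g + K (P f) := by
      have hgf : g + P f = f := by rw [hgdef]; abel
      conv_lhs => rw [← hgf]
      rw [map_add]
    rw [hsplit, map_add]
    abel
  have hhfj : h - fj = Binv w1 + Binv w2 := by
    have h1 := hBB' (h - fj)
    rw [hdecomp, map_add] at h1
    exact h1.symm
  -- bound on Binv w1
  have huB : ‖((Binv w1 : Vsub (⇑φ) lvl j) : H)‖ ≤ Q ^ 2 / (1 - γ) * ‖g‖ := by
    set u : Vsub (⇑φ) lvl j := Binv w1 with hudef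
    have hBu : B u = w1 := hBB w1
    set S : ℝ := ∑ k ∈ (hfin j).toFinset, σ (lvl k) * ⟪(u : H), φ k⟫ ^ 2 with hSdef
    have hS0 : 0 ≤ S :=
      Finset.sum_nonneg fun k _ => mul_nonneg (hσpos _).le (sq_nonneg _)
    have hSl : σ j * ‖(u : H)‖ ^ 2 ≤ S := hSlow _ u.2
    have hKuS : ⟪K (u : H), (u : H)⟫ ≤ Q * S := hKup _ u.2
    -- upper bound for the form at g
    have hgup : ⟪K g, g⟫ ≤ Q * (σ j * ‖g‖ ^ 2) := by
      refine le_trans (hill g).2 (mul_le_mul_of_nonneg_left ?_ hQ.le)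
      have hb : ∀ k, σ (lvl k) * ⟪g, φ k⟫ ^ 2 ≤ σ j * ⟪g, φ k⟫ ^ 2 := by
        intro k
        by_cases hk : lvl k ≤ j
        · rw [hgortho k hk]
          simp
        · exact mul_le_mul_of_nonneg_right
            (hσmono j (lvl k) (not_le.mp hk).le) (sq_nonneg _)
      calc (∑' k, σ (lvl k) * ⟪g, φ k⟫ ^ 2)
          ≤ ∑' k, σ j * ⟪g, φ k⟫ ^ 2 :=
            Summable.tsum_le_tsum hb (hSumw g) (((hPar g).summable).mul_left (σ j))
        _ = σ j * ∑' k, ⟪g, φ k⟫ ^ 2 := tsum_mul_left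
        _ = σ j * ‖g‖ ^ 2 := by rw [(hPar g).tsum_eq]
    -- the form of B at u equals ⟪K g, u⟫
    have hfu : ⟪(B u : Vsub (⇑φ) lvl j), (u : Vsub (⇑φ) lvl j)⟫ = ⟪K g, (u : H)⟫ := by
      rw [hBu, Submodule.coe_inner]
      have : ((w1 : Vsub (⇑φ) lvl j) : H) = P (K g) := rfl
      rw [this]
      exact hProj (K g) (u : H) u.2
    have hlow : (1 - γ) * S ≤ Q * ⟪K g, (u : H)⟫ := by
      have h1 := hBlow u
      rw [hfu] at h1
      have h2 : γ * (σ j * ‖(u : H)‖ ^ 2) ≤ γ * S :=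
        mul_le_mul_of_nonneg_left hSl hγ0.le
      linarith
    have hsq1 : ((1 - γ) * S) ^ 2 ≤ (Q * ⟪K g, (u : H)⟫) ^ 2 :=
      pow_le_pow_left₀ (mul_nonneg h1γ.le hS0) hlow 2
    have hsq2 : ⟪K g, (u : H)⟫ ^ 2 ≤ Q * (σ j * ‖g‖ ^ 2) * (Q * S) := by
      refine le_trans (hCS g (u : H)) ?_
      exact mul_le_mul hgup hKuS (hKpsd _)
        (mul_nonneg hQ.le (mul_nonneg hσj.le (sq_nonneg _)))
    have hkey : (1 - γ) ^ 2 * S * S ≤ Q ^ 4 * (σ j * ‖g‖ ^ 2) * S := by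
      nlinarith [hsq1, hsq2, sq_nonneg Q]
    have hSb : (1 - γ) ^ 2 * S ≤ Q ^ 4 * (σ j * ‖g‖ ^ 2) := by
      rcases hS0.eq_or_lt with h0 | h0
      · rw [← h0, mul_zero]
        exact mul_nonneg (by positivity) (mul_nonneg hσj.le (sq_nonneg _))
      · exact le_of_mul_le_mul_right hkey h0
    have hub2 : (1 - γ) ^ 2 * ‖(u : H)‖ ^ 2 ≤ Q ^ 4 * ‖g‖ ^ 2 := by
      have h1 : (1 - γ) ^ 2 * (σ j * ‖(u : H)‖ ^ 2) ≤ Q ^ 4 * (σ j * ‖g‖ ^ 2) :=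
        le_trans (mul_le_mul_of_nonneg_left hSl (by positivity)) hSb
      have h2 : σ j * ((1 - γ) ^ 2 * ‖(u : H)‖ ^ 2) ≤ σ j * (Q ^ 4 * ‖g‖ ^ 2) := by
        nlinarith [h1]
      exact le_of_mul_le_mul_left h2 hσj
    rw [div_mul_eq_mul_div, le_div_iff₀ h1γ]
    have hl0 : 0 ≤ ‖(u : H)‖ * (1 - γ) := mul_nonneg (norm_nonneg _) h1γ.le
    have hr0 : 0 ≤ Q ^ 2 * ‖g‖ := by positivity
    nlinarith [hub2, hl0, hr0]
  -- bound on w2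
  have hPfle : ‖P f‖ ≤ ‖f‖ := by
    have h0 : ⟪f - P f, P f⟫ = 0 := horth f (P f) (Pclm_mem (⇑φ) lvl hfin j f)
    rw [inner_sub_left] at h0
    have h1 : ‖P f‖ ^ 2 ≤ ‖f‖ * ‖P f‖ := by
      rw [← real_inner_self_eq_norm_sq]
      have h2 : ⟪P f, P f⟫ = ⟪f, P f⟫ := by linarith
      rw [h2]
      exact real_inner_le_norm _ _
    rcases (norm_nonneg (P f)).eq_or_lt with h3 | h3
    · rw [← h3]; exact norm_nonneg f
    · nlinarith [h1, h3]
  have hw2b : ‖w2‖ ≤ ‖B - Kgal (⇑φ) lvl hfin K j‖ * ‖f‖ + ‖(z : H)‖ := by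
    rw [hw2def]
    have h1 : Kgal (⇑φ) lvl hfin K j fj - B fj
        = -((B - Kgal (⇑φ) lvl hfin K j) fj) := by
      rw [ContinuousLinearMap.sub_apply]
      abel
    calc ‖Kgal (⇑φ) lvl hfin K j fj - B fj + z‖
        ≤ ‖Kgal (⇑φ) lvl hfin K j fj - B fj‖ + ‖z‖ := norm_add_le _ _
      _ = ‖(B - Kgal (⇑φ) lvl hfin K j) fj‖ + ‖z‖ := by rw [h1, norm_neg]
      _ ≤ ‖B - Kgal (⇑φ) lvl hfin K j‖ * ‖fj‖ + ‖z‖ := by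
          gcongr
          exact (B - Kgal (⇑φ) lvl hfin K j).le_opNorm fj
      _ ≤ ‖B - Kgal (⇑φ) lvl hfin K j‖ * ‖f‖ + ‖(z : H)‖ := by
          have hfjn : ‖fj‖ ≤ ‖f‖ := by
            rw [Submodule.coe_norm]
            exact hPfle
          have hzz : ‖z‖ = ‖(z : H)‖ := Submodule.coe_norm z
          rw [hzz]
          exact add_le_add
            (mul_le_mul_of_nonneg_left hfjn
              ((B - Kgal (⇑φ) lvl hfin K j).opNorm_nonneg)) le_rfl
  have hbw2 : ‖Binv w2‖ ≤ Q / ((1 - γ) * σ j)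
      * (‖B - Kgal (⇑φ) lvl hfin K j‖ * ‖f‖ + ‖(z : H)‖) :=
    le_trans (hBinv_bd w2)
      (mul_le_mul_of_nonneg_left hw2b (div_nonneg hQ.le (mul_pos h1γ hσj).le))
  -- assembly
  have htri : ‖(h : H) - f‖
      ≤ ‖((Binv w1 : Vsub (⇑φ) lvl j) : H)‖ + ‖Binv w2‖ + ‖g‖ := by
    have hco : (h : H) - f = ((h - fj : Vsub (⇑φ) lvl j) : H) + -g := by
      push_cast
      rw [hgdef]
      abel
    rw [hco]
    calc ‖((h - fj : Vsub (⇑φ) lvl j) : H) + -g‖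
        ≤ ‖((h - fj : Vsub (⇑φ) lvl j) : H)‖ + ‖-g‖ := norm_add_le _ _
      _ = ‖(h - fj : Vsub (⇑φ) lvl j)‖ + ‖g‖ := by rw [norm_neg, Submodule.coe_norm]
      _ ≤ ‖((Binv w1 : Vsub (⇑φ) lvl j) : H)‖ + ‖Binv w2‖ + ‖g‖ := by
          rw [hhfj]
          have h2 := norm_add_le (Binv w1) (Binv w2)
          have h3 : ‖Binv w1‖ = ‖((Binv w1 : Vsub (⇑φ) lvl j) : H)‖ :=
            Submodule.coe_norm _
          linarith [h2, h3.le, h3.ge]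
  set E : ℝ := ‖B - Kgal (⇑φ) lvl hfin K j‖ with hEdef
  set X : ℝ := ‖g‖ with hXdef
  set Y : ℝ := (σ j)⁻¹ * ‖f‖ * E with hYdef
  set Z : ℝ := (σ j)⁻¹ * ‖(z : H)‖ with hZdef
  have hXn : 0 ≤ X := norm_nonneg _
  have hEn : 0 ≤ E := hEdef ▸ (B - Kgal (⇑φ) lvl hfin K j).opNorm_nonneg
  have hYn : 0 ≤ Y := by
    rw [hYdef]
    exact mul_nonneg (mul_nonneg (inv_nonneg.mpr hσj.le) (norm_nonneg _)) hEn
  have hZn : 0 ≤ Z := by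
    rw [hZdef]
    exact mul_nonneg (inv_nonneg.mpr hσj.le) (norm_nonneg _)
  have hdiv : Q / ((1 - γ) * σ j) * (E * ‖f‖ + ‖(z : H)‖) = Q / (1 - γ) * (Y + Z) := by
    rw [hYdef, hZdef, ← div_div, div_eq_mul_inv (Q / (1 - γ))]
    ring
  have hgoal : ‖(h : H) - f‖ ≤ Q ^ 2 / (1 - γ) * X + Q / (1 - γ) * (Y + Z) + X := by
    rw [← hdiv]
    linarith only [htri, huB, hbw2]
  have hk1 : (Q ^ 2 / (1 - γ) + 1) * X ≤ ((Q ^ 2 + Q + 1) / (1 - γ) + 1) * X :=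
    mul_le_mul_of_nonneg_right hC1 hXn
  have hk2 : Q / (1 - γ) * (Y + Z) ≤ ((Q ^ 2 + Q + 1) / (1 - γ) + 1) * (Y + Z) :=
    mul_le_mul_of_nonneg_right hC2 (add_nonneg hYn hZn)
  have hfinal : ‖(h : H) - f‖ ≤ ((Q ^ 2 + Q + 1) / (1 - γ) + 1) * (X + Y + Z) := by
    linarith only [hgoal, hk1, hk2]
  exact hfinal
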